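/- arXiv:1706.00764 — 2 statements merged into one kernel-verified Lean document; each statement's English description precedes it below -/
import Mathlib

section
/- Let f : {-1,1}^n → ℝ satisfy Σ_{S⊆{1,...,n}} |f̂(S)| ≤ s, and let ε > 0. Define g : {-1,1}^n → ℝ by keeping exactly those Fourier terms of f whose coefficient has magnitude at least ε/s, i.e., g = Σ_{S : |f̂(S)| ≥ ε/s} f̂(S)·χ_S. Then g has at most s²/ε nonzero Fourier coefficients, and E_{x uniform on {-1,1}^n}[(f(x) − g(x))²] ≤ ε. -/
open Finset
open scoped Classical

noncomputable def cube (n : ℕ) : Finset (Fin n → ℝ) :=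
  Fintype.piFinset fun _ => ({-1, 1} : Finset ℝ)

def chi {n : ℕ} (S : Finset (Fin n)) (x : Fin n → ℝ) : ℝ := ∏ i ∈ S, x i

noncomputable def expectation {n : ℕ} (g : (Fin n → ℝ) → ℝ) : ℝ :=
  (2 ^ n : ℝ)⁻¹ * ∑ x ∈ cube n, g x

noncomputable def fhat {n : ℕ} (f : (Fin n → ℝ) → ℝ) (S : Finset (Fin n)) : ℝ :=
  expectation fun x => f x * chi S x

lemma mem_cube {n : ℕ} {x : Fin n → ℝ} (hx : x ∈ cube n) (i : Fin n) :
    x i = -1 ∨ x i = 1 := by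
  simp [cube, Fintype.mem_piFinset] at hx
  exact hx i

lemma sum_cube_prod {n : ℕ} (h : Fin n → ℝ → ℝ) :
    ∑ x ∈ cube n, ∏ i, h i (x i) = ∏ i, (h i (-1) + h i 1) := by
  rw [cube, ← Finset.prod_univ_sum]
  exact Finset.prod_congr rfl fun i _ => Finset.sum_pair (by norm_num)

lemma chi_eq {n : ℕ} (S : Finset (Fin n)) (x : Fin n → ℝ) :
    chi S x = ∏ i, (if i ∈ S then x i else 1) := by
  rw [Finset.prod_ite_mem, Finset.univ_inter, chi]

lemma expectation_sum {n : ℕ} {ι : Type*} (t : Finset ι) (F : ι → (Fin n → ℝ) → ℝ) :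
    expectation (fun x => ∑ i ∈ t, F i x) = ∑ i ∈ t, expectation (F i) := by
  unfold expectation
  rw [Finset.sum_comm, Finset.mul_sum]

lemma expectation_smul {n : ℕ} (c : ℝ) (F : (Fin n → ℝ) → ℝ) :
    expectation (fun x => c * F x) = c * expectation F := by
  unfold expectation
  rw [← Finset.mul_sum]
  ring

lemma exp_chi_chi {n : ℕ} (S T : Finset (Fin n)) :
    expectation (fun x => chi S x * chi T x) = if S = T then 1 else 0 := by
  have h1 : ∀ x : Fin n → ℝ, chi S x * chi T x =
      ∏ i, ((if i ∈ S then x i else 1) * (if i ∈ T then x i else 1)) := by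
    intro x; rw [chi_eq, chi_eq, ← Finset.prod_mul_distrib]
  unfold expectation
  simp only [h1]
  rw [sum_cube_prod (fun i v => (if i ∈ S then v else 1) * (if i ∈ T then v else 1))]
  by_cases hST : S = T
  · subst hST
    rw [if_pos rfl]
    have h2 : ∀ i : Fin n, ((if i ∈ S then (-1:ℝ) else 1) * (if i ∈ S then (-1:ℝ) else 1)
        + (if i ∈ S then (1:ℝ) else 1) * (if i ∈ S then (1:ℝ) else 1)) = 2 := by
      intro i; split_ifs <;> norm_num
    rw [Finset.prod_congr rfl fun i _ => h2 i, Finset.prod_const]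
    simp
  · rw [if_neg hST]
    obtain ⟨i, hi⟩ : ∃ i, ¬((i ∈ S) ↔ (i ∈ T)) := by
      by_contra hc
      push_neg at hc
      exact hST (Finset.ext fun i => hc i)
    have : ((if i ∈ S then (-1:ℝ) else 1) * (if i ∈ T then (-1:ℝ) else 1)
        + (if i ∈ S then (1:ℝ) else 1) * (if i ∈ T then (1:ℝ) else 1)) = 0 := by
      by_cases h1 : i ∈ S <;> by_cases h2 : i ∈ T <;>
        simp [h1, h2] at hi ⊢ <;> tauto
    rw [Finset.prod_eq_zero (Finset.mem_univ i) this, mul_zero]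

lemma sum_chi_chi {n : ℕ} {x y : Fin n → ℝ} (hx : x ∈ cube n) (hy : y ∈ cube n) :
    ∑ S : Finset (Fin n), chi S x * chi S y = if x = y then (2:ℝ) ^ n else 0 := by
  have h1 : ∀ S : Finset (Fin n), chi S x * chi S y
      = (∏ i ∈ S, x i * y i) * ∏ i ∈ Finset.univ \ S, (1:ℝ) := by
    intro S; simp [chi, Finset.prod_mul_distrib]
  simp only [h1]
  rw [← Finset.powerset_univ, ← Finset.prod_add]
  by_cases hxy : x = y
  · subst hxy
    rw [if_pos rfl]
    have h2 : ∀ i : Fin n, x i * x i + 1 = 2 := by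
      intro i; rcases mem_cube hx i with h | h <;> rw [h] <;> norm_num
    rw [Finset.prod_congr rfl fun i _ => h2 i, Finset.prod_const]
    simp
  · rw [if_neg hxy]
    obtain ⟨i, hi⟩ : ∃ i, x i ≠ y i := Function.ne_iff.mp hxy
    apply Finset.prod_eq_zero (Finset.mem_univ i)
    rcases mem_cube hx i with h1 | h1 <;> rcases mem_cube hy i with h2 | h2 <;>
      first
        | (exact absurd (h1.trans h2.symm) hi)
        | (rw [h1, h2]; norm_num)

lemma inversion {n : ℕ} (f : (Fin n → ℝ) → ℝ) {x : Fin n → ℝ} (hx : x ∈ cube n) :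
    ∑ S : Finset (Fin n), fhat f S * chi S x = f x := by
  unfold fhat expectation
  have step1 : ∀ S : Finset (Fin n),
      ((2 ^ n : ℝ)⁻¹ * ∑ y ∈ cube n, f y * chi S y) * chi S x
      = (2 ^ n : ℝ)⁻¹ * ∑ y ∈ cube n, f y * (chi S y * chi S x) := by
    intro S
    rw [mul_assoc, Finset.sum_mul]
    congr 1
    exact Finset.sum_congr rfl fun y _ => by ring
  simp only [step1]
  rw [← Finset.mul_sum, Finset.sum_comm]
  have step2 : ∀ y ∈ cube n, ∑ S : Finset (Fin n), f y * (chi S y * chi S x)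
      = f y * (if y = x then (2:ℝ) ^ n else 0) := by
    intro y hy
    rw [← Finset.mul_sum, sum_chi_chi hy hx]
  rw [Finset.sum_congr rfl step2]
  simp only [mul_ite, mul_zero]
  rw [Finset.sum_ite_eq' (cube n) x (fun y => f y * 2 ^ n)]
  rw [if_pos hx]
  field_simp

lemma parseval {n : ℕ} (h : (Fin n → ℝ) → ℝ) :
    expectation (fun x => h x ^ 2) = ∑ S : Finset (Fin n), fhat h S ^ 2 := by
  have key : expectation (fun x => h x ^ 2)
      = expectation (fun x => ∑ S : Finset (Fin n), ∑ T : Finset (Fin n),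
          (fhat h S * fhat h T) * (chi S x * chi T x)) := by
    unfold expectation
    congr 1
    apply Finset.sum_congr rfl
    intro x hx
    have := inversion h hx
    calc h x ^ 2 = (∑ S : Finset (Fin n), fhat h S * chi S x)
        * (∑ T : Finset (Fin n), fhat h T * chi T x) := by rw [this]; ring
      _ = ∑ S : Finset (Fin n), ∑ T : Finset (Fin n),
          (fhat h S * fhat h T) * (chi S x * chi T x) := by
        rw [Finset.sum_mul_sum]
        exact Finset.sum_congr rfl fun S _ => Finset.sum_congr rfl fun T _ => by ring
  rw [key, expectation_sum]
  apply Finset.sum_congr rfl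
  intro S _
  rw [expectation_sum]
  have h3 : ∀ T : Finset (Fin n),
      expectation (fun x => (fhat h S * fhat h T) * (chi S x * chi T x))
      = (fhat h S * fhat h T) * (if S = T then 1 else 0) := by
    intro T
    rw [expectation_smul (fhat h S * fhat h T) (fun x => chi S x * chi T x), exp_chi_chi]
  rw [Finset.sum_congr rfl fun T _ => h3 T]
  simp only [mul_ite, mul_one, mul_zero]
  rw [Finset.sum_ite_eq Finset.univ S (fun T => fhat h S * fhat h T)]
  simp [pow_two]

lemma fhat_comb {n : ℕ} (F : Finset (Finset (Fin n))) (a : Finset (Fin n) → ℝ)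
    (T : Finset (Fin n)) :
    fhat (fun x => ∑ S ∈ F, a S * chi S x) T = if T ∈ F then a T else 0 := by
  unfold fhat
  have h1 : ∀ x : Fin n → ℝ, (∑ S ∈ F, a S * chi S x) * chi T x
      = ∑ S ∈ F, a S * (chi S x * chi T x) := by
    intro x
    rw [Finset.sum_mul]
    exact Finset.sum_congr rfl fun S _ => by ring
  simp only [h1]
  rw [expectation_sum]
  have h2 : ∀ S : Finset (Fin n),
      expectation (fun x => a S * (chi S x * chi T x)) = a S * (if S = T then 1 else 0) := by
    intro S
    rw [expectation_smul (a S) (fun x => chi S x * chi T x), exp_chi_chi]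
  rw [Finset.sum_congr rfl fun S _ => h2 S]
  simp only [mul_ite, mul_one, mul_zero]
  exact Finset.sum_ite_eq' F T a

lemma fhat_sub {n : ℕ} (f g : (Fin n → ℝ) → ℝ) (S : Finset (Fin n)) :
    fhat (fun x => f x - g x) S = fhat f S - fhat g S := by
  unfold fhat expectation
  rw [← mul_sub, ← Finset.sum_sub_distrib]
  congr 1
  exact Finset.sum_congr rfl fun x _ => by ring

/-- Truncating an L1-bounded function to its Fourier coefficients of magnitude at least ε/s
yields an (s²/ε)-sparse function that is ε-close to f in squared L2 distance. -/
theorem sparse_approximation (n : ℕ) (f : (Fin n → ℝ) → ℝ) (s ε : ℝ) (hε : 0 < ε)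
    (hL1 : ∑ S : Finset (Fin n), |fhat f S| ≤ s)
    (g : (Fin n → ℝ) → ℝ)
    (hg : g = fun x =>
      ∑ S ∈ Finset.univ.filter (fun S : Finset (Fin n) => ε / s ≤ |fhat f S|),
        fhat f S * chi S x) :
    ((Finset.univ.filter fun S : Finset (Fin n) => fhat g S ≠ 0).card : ℝ) ≤ s ^ 2 / ε ∧
    expectation (fun x => (f x - g x) ^ 2) ≤ ε := by
  set F : Finset (Finset (Fin n)) :=
    Finset.univ.filter (fun S : Finset (Fin n) => ε / s ≤ |fhat f S|) with hF
  have hghat : ∀ T : Finset (Fin n), fhat g T = if T ∈ F then fhat f T else 0 := by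
    intro T
    rw [hg]
    exact fhat_comb F (fhat f) T
  have hs0 : 0 ≤ s :=
    le_trans (Finset.sum_nonneg fun S _ => abs_nonneg _) hL1
  -- Fourier coefficients of f - g
  have hsub : ∀ S : Finset (Fin n),
      fhat (fun x => f x - g x) S = if S ∈ F then 0 else fhat f S := by
    intro S
    rw [fhat_sub, hghat S]
    split_ifs <;> ring
  rcases eq_or_lt_of_le hs0 with hs | hs
  · -- s = 0 : all coefficients are zero
    have hall : ∀ S : Finset (Fin n), fhat f S = 0 := by
      intro S
      have h1 : |fhat f S| ≤ 0 := by
        calc |fhat f S| ≤ ∑ T : Finset (Fin n), |fhat f T| :=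
              Finset.single_le_sum (f := fun T => |fhat f T|)
                (fun T _ => abs_nonneg _) (Finset.mem_univ S)
          _ ≤ s := hL1
          _ = 0 := hs.symm
      exact abs_eq_zero.mp (le_antisymm h1 (abs_nonneg _))
    have hg0 : ∀ T : Finset (Fin n), fhat g T = 0 := by
      intro T; rw [hghat T, hall T]; simp
    constructor
    · have : (Finset.univ.filter fun S : Finset (Fin n) => fhat g S ≠ 0) = ∅ := by
        apply Finset.filter_eq_empty_iff.mpr
        intro S _
        simp [hg0 S]
      rw [this]
      simp
      positivity
    · have : expectation (fun x => (f x - g x) ^ 2) = ∑ S : Finset (Fin n),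
          fhat (fun x => f x - g x) S ^ 2 := parseval _
      rw [this]
      have : ∀ S : Finset (Fin n), fhat (fun x => f x - g x) S ^ 2 = 0 := by
        intro S
        rw [hsub S]
        split_ifs with h
        · ring
        · rw [hall S]; ring
      rw [Finset.sum_congr rfl fun S _ => this S]
      simp
      exact le_of_lt hε
  · -- s > 0
    constructor
    · -- card bound
      have hsubset : (Finset.univ.filter fun S : Finset (Fin n) => fhat g S ≠ 0) ⊆ F := by
        intro S hS
        rw [Finset.mem_filter] at hS
        by_contra hSF
        exact hS.2 (by rw [hghat S, if_neg hSF])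
      have hcard : (F.card : ℝ) * (ε / s) ≤ s := by
        calc (F.card : ℝ) * (ε / s) = ∑ _S ∈ F, (ε / s) := by
              rw [Finset.sum_const, nsmul_eq_mul]
          _ ≤ ∑ S ∈ F, |fhat f S| := by
              apply Finset.sum_le_sum
              intro S hS
              exact (Finset.mem_filter.mp hS).2
          _ ≤ ∑ S : Finset (Fin n), |fhat f S| :=
              Finset.sum_le_sum_of_subset_of_nonneg (Finset.subset_univ F)
                (fun S _ _ => abs_nonneg _)
          _ ≤ s := hL1
      have h1 : ((Finset.univ.filter fun S : Finset (Fin n) => fhat g S ≠ 0).card : ℝ)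
          ≤ (F.card : ℝ) := by
        exact_mod_cast Finset.card_le_card hsubset
      refine h1.trans ?_
      rw [le_div_iff₀ hε]
      have := mul_le_mul_of_nonneg_right hcard (le_of_lt hs)
      calc (F.card : ℝ) * ε = (F.card : ℝ) * (ε / s) * s := by field_simp
        _ ≤ s * s := this
        _ = s ^ 2 := by ring
    · -- L2 bound
      rw [parseval (fun x => f x - g x)]
      have hterm : ∀ S : Finset (Fin n), fhat (fun x => f x - g x) S ^ 2
          ≤ (ε / s) * |fhat f S| := by
        intro S
        rw [hsub S]
        split_ifs with h
        · have h0 : ((0:ℝ)) ^ 2 = 0 := by norm_num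
          rw [h0]
          positivity
        · have hlt : |fhat f S| < ε / s := by
            simp only [hF, Finset.mem_filter, Finset.mem_univ, true_and] at h
            exact not_le.mp h
          calc fhat f S ^ 2 = |fhat f S| * |fhat f S| := by
                rw [abs_mul_abs_self]; ring
            _ ≤ (ε / s) * |fhat f S| :=
              mul_le_mul_of_nonneg_right (le_of_lt hlt) (abs_nonneg _)
      calc ∑ S : Finset (Fin n), fhat (fun x => f x - g x) S ^ 2
          ≤ ∑ S : Finset (Fin n), (ε / s) * |fhat f S| :=
            Finset.sum_le_sum fun S _ => hterm S
        _ = (ε / s) * ∑ S : Finset (Fin n), |fhat f S| := by rw [Finset.mul_sum]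
        _ ≤ (ε / s) * s :=
            mul_le_mul_of_nonneg_left hL1 (le_of_lt (div_pos hε hs))
        _ = ε := by field_simp
end

section
/- Let f : {-1,1}^n → ℝ be (ε/4, d, s)-bounded, i.e., Σ_{S : |S| > d} f̂(S)² ≤ ε/4 and Σ_S |f̂(S)| ≤ s, where 0 < ε. Then there exists a function h : {-1,1}^n → ℝ that is a linear combination of at most 4s²/ε + 1 parity functions, each of degree at most d (together with the constant term), such that E_{x uniform on {-1,1}^n}[(f(x) − h(x))²] ≤ ε/2. -/
open Finset
open scoped Classical

lemma mem_cube_iff {n : ℕ} {x : Fin n → ℝ} : x ∈ cube n ↔ ∀ i, x i = -1 ∨ x i = 1 := by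
  simp [cube, Fintype.mem_piFinset]

lemma cube_sum_prod {n : ℕ} (g : Fin n → ℝ → ℝ) :
    ∑ x ∈ cube n, ∏ i, g i (x i) = ∏ i, (g i (-1) + g i 1) := by
  rw [cube, ← Finset.prod_univ_sum]
  congr 1
  ext i
  rw [Finset.sum_pair (by norm_num)]

lemma chi_as_prod {n : ℕ} (S : Finset (Fin n)) (x : Fin n → ℝ) :
    chi S x = ∏ i, if i ∈ S then x i else 1 := by
  rw [chi, Finset.prod_ite_mem, Finset.univ_inter]

lemma orth {n : ℕ} (S S' : Finset (Fin n)) :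
    ∑ x ∈ cube n, chi S x * chi S' x = if S = S' then (2:ℝ)^n else 0 := by
  have : ∀ x : Fin n → ℝ, chi S x * chi S' x
      = ∏ i, ((if i ∈ S then x i else 1) * (if i ∈ S' then x i else 1)) := by
    intro x; rw [chi_as_prod, chi_as_prod, ← Finset.prod_mul_distrib]
  simp_rw [this]
  rw [cube_sum_prod (fun i a => (if i ∈ S then a else 1) * (if i ∈ S' then a else 1))]
  by_cases h : S = S'
  · subst h
    simp only [if_pos rfl, if_true, eq_self_iff_true]
    have : ∀ i : Fin n, (if i ∈ S then (-1:ℝ) else 1) * (if i ∈ S then (-1:ℝ) else 1)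
        + (if i ∈ S then (1:ℝ) else 1) * (if i ∈ S then (1:ℝ) else 1) = 2 := by
      intro i; by_cases hi : i ∈ S <;> simp [hi] <;> norm_num
    simp_rw [this]
    simp
  · rw [if_neg h]
    have : ∃ i, (i ∈ S ∧ i ∉ S') ∨ (i ∈ S' ∧ i ∉ S) := by
      by_contra hc
      push_neg at hc
      apply h
      ext i
      have := hc i
      tauto
    obtain ⟨i, hi⟩ := this
    apply Finset.prod_eq_zero (Finset.mem_univ i)
    rcases hi with ⟨h1, h2⟩ | ⟨h1, h2⟩ <;> simp [h1, h2]

lemma kernel {n : ℕ} {x y : Fin n → ℝ} (hx : x ∈ cube n) (hy : y ∈ cube n) :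
    ∑ S : Finset (Fin n), chi S x * chi S y = if x = y then (2:ℝ)^n else 0 := by
  have h1 : ∀ S : Finset (Fin n), chi S x * chi S y = ∏ i ∈ S, (x i * y i) := by
    intro S; rw [chi, chi, ← Finset.prod_mul_distrib]
  simp_rw [h1]
  have h2 : ∑ S : Finset (Fin n), ∏ i ∈ S, (x i * y i)
      = ∏ i, (x i * y i + 1) := by
    rw [Finset.prod_add]
    simp [← Finset.powerset_univ]
  rw [h2]
  rw [mem_cube_iff] at hx hy
  by_cases h : x = y
  · subst h
    rw [if_pos rfl]
    have : ∀ i, x i * x i + 1 = 2 := by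
      intro i; rcases hx i with h | h <;> rw [h] <;> norm_num
    simp_rw [this]
    simp
  · rw [if_neg h]
    have : ∃ i, x i ≠ y i := by
      by_contra hc; push_neg at hc; exact h (funext hc)
    obtain ⟨i, hi⟩ := this
    apply Finset.prod_eq_zero (Finset.mem_univ i)
    rcases hx i with h1 | h1 <;> rcases hy i with h2 | h2
    · exact absurd (h1.trans h2.symm) hi
    · rw [h1, h2]; norm_num
    · rw [h1, h2]; norm_num
    · exact absurd (h1.trans h2.symm) hi

lemma two_pow_ne {n : ℕ} : ((2:ℝ)^n) ≠ 0 := by positivity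

lemma sum_cube_mul_chi {n : ℕ} (f : (Fin n → ℝ) → ℝ) (S : Finset (Fin n)) :
    ∑ x ∈ cube n, f x * chi S x = 2^n * fhat f S := by
  rw [fhat, expectation]
  field_simp

lemma parseval_key {n : ℕ} (f : (Fin n → ℝ) → ℝ) :
    ∑ x ∈ cube n, f x ^ 2 = 2^n * ∑ S : Finset (Fin n), fhat f S ^ 2 := by
  have h1 : ∀ S : Finset (Fin n), (2:ℝ)^n * fhat f S * (2^n * fhat f S)
      = (∑ x ∈ cube n, f x * chi S x) * (∑ y ∈ cube n, f y * chi S y) := by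
    intro S; rw [sum_cube_mul_chi]
  have h2 : ∑ S : Finset (Fin n), (∑ x ∈ cube n, f x * chi S x) * (∑ y ∈ cube n, f y * chi S y)
      = ∑ x ∈ cube n, ∑ y ∈ cube n, f x * f y * ∑ S : Finset (Fin n), chi S x * chi S y := by
    simp_rw [Finset.sum_mul_sum, Finset.mul_sum]
    rw [Finset.sum_comm]
    congr 1; ext x
    rw [Finset.sum_comm]
    congr 1; ext y
    congr 1; ext S
    ring
  have h3 : ∑ x ∈ cube n, ∑ y ∈ cube n, f x * f y * ∑ S : Finset (Fin n), chi S x * chi S y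
      = 2^n * ∑ x ∈ cube n, f x ^ 2 := by
    rw [Finset.mul_sum]
    apply Finset.sum_congr rfl
    intro x hx
    have e : ∀ y ∈ cube n, f x * f y * ∑ S : Finset (Fin n), chi S x * chi S y
        = if x = y then f x * f y * 2^n else 0 := by
      intro y hy
      rw [kernel hx hy]
      split <;> simp
    rw [Finset.sum_congr rfl e, Finset.sum_ite_eq (cube n) x (fun y => f x * f y * 2^n),
      if_pos hx]
    ring
  have hA : ∑ S : Finset (Fin n), ((2:ℝ)^n * fhat f S) * (2^n * fhat f S)
      = 2^n * ∑ x ∈ cube n, f x ^ 2 := by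
    calc ∑ S : Finset (Fin n), ((2:ℝ)^n * fhat f S) * (2^n * fhat f S)
        = ∑ S : Finset (Fin n), (∑ x ∈ cube n, f x * chi S x) * (∑ y ∈ cube n, f y * chi S y) := by
          apply Finset.sum_congr rfl; intro S _; rw [sum_cube_mul_chi]
      _ = 2^n * ∑ x ∈ cube n, f x ^ 2 := h2.trans h3
  have hB : ∑ S : Finset (Fin n), ((2:ℝ)^n * fhat f S) * (2^n * fhat f S)
      = 2^n * (2^n * ∑ S : Finset (Fin n), fhat f S ^ 2) := by
    rw [Finset.mul_sum, Finset.mul_sum]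
    apply Finset.sum_congr rfl; intro S _; ring
  exact mul_left_cancel₀ two_pow_ne ((hB.symm.trans hA).symm)

lemma exp_sub_sq {n : ℕ} (f : (Fin n → ℝ) → ℝ) (T : Finset (Finset (Fin n))) :
    expectation (fun x => (f x - ∑ S ∈ T, fhat f S * chi S x) ^ 2)
      = ∑ S ∈ Finset.univ \ T, fhat f S ^ 2 := by
  set c := fhat f with hc
  have hA : ∑ x ∈ cube n, f x * ∑ S ∈ T, c S * chi S x = 2^n * ∑ S ∈ T, c S ^ 2 := by
    have e : ∀ x, f x * ∑ S ∈ T, c S * chi S x = ∑ S ∈ T, c S * (f x * chi S x) := by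
      intro x; rw [Finset.mul_sum]; apply Finset.sum_congr rfl; intro S _; ring
    simp_rw [e]
    rw [Finset.sum_comm, Finset.mul_sum]
    apply Finset.sum_congr rfl
    intro S _
    rw [← Finset.mul_sum, sum_cube_mul_chi]
    ring
  have hB : ∑ x ∈ cube n, (∑ S ∈ T, c S * chi S x) ^ 2 = 2^n * ∑ S ∈ T, c S ^ 2 := by
    have e : ∀ x, (∑ S ∈ T, c S * chi S x) ^ 2
        = ∑ S ∈ T, ∑ S' ∈ T, c S * c S' * (chi S x * chi S' x) := by
      intro x
      rw [sq, Finset.sum_mul_sum]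
      apply Finset.sum_congr rfl; intro S _
      apply Finset.sum_congr rfl; intro S' _
      ring
    simp_rw [e]
    rw [Finset.sum_comm, Finset.mul_sum]
    apply Finset.sum_congr rfl
    intro S hS
    rw [Finset.sum_comm]
    have e2 : ∀ S' ∈ T, ∑ x ∈ cube n, c S * c S' * (chi S x * chi S' x)
        = if S = S' then c S * c S' * 2^n else 0 := by
      intro S' _
      rw [← Finset.mul_sum, orth]
      split <;> simp
    rw [Finset.sum_congr rfl e2, Finset.sum_ite_eq T S (fun S' => c S * c S' * 2^n), if_pos hS]
    ring
  have hC : ∑ x ∈ cube n, f x ^ 2 = 2^n * ∑ S : Finset (Fin n), c S ^ 2 := parseval_key f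
  rw [expectation]
  have e : ∀ x, (f x - ∑ S ∈ T, c S * chi S x) ^ 2
      = f x ^ 2 - 2 * (f x * ∑ S ∈ T, c S * chi S x) + (∑ S ∈ T, c S * chi S x) ^ 2 := by
    intro x; ring
  simp_rw [e]
  rw [Finset.sum_add_distrib, Finset.sum_sub_distrib, ← Finset.mul_sum, hA, hB, hC,
    Finset.sum_sdiff_eq_sub (Finset.subset_univ T)]
  field_simp
  ring

/-- If f is (ε/4,d,s)-bounded (Fourier mass above degree d at most ε/4 and Fourier
L1 norm at most s), then there is a linear combination h of at most 4s²/ε + 1 parity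
functions of degree at most d (including the constant term χ_∅) with E[(f-h)²] ≤ ε/2. -/
theorem sparse_low_degree_approx (n d : ℕ) (f : (Fin n → ℝ) → ℝ) (s ε : ℝ) (hε : 0 < ε)
    (hconc : ∑ S ∈ Finset.univ.filter (fun S : Finset (Fin n) => d < S.card),
        fhat f S ^ 2 ≤ ε / 4)
    (hL1 : ∑ S : Finset (Fin n), |fhat f S| ≤ s) :
    ∃ (T : Finset (Finset (Fin n))) (coef : Finset (Fin n) → ℝ),
      ((T.card : ℝ) ≤ 4 * s ^ 2 / ε + 1) ∧
      (∀ S ∈ T, S.card ≤ d) ∧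
      expectation (fun x => (f x - ∑ S ∈ T, coef S * chi S x) ^ 2) ≤ ε / 2 := by
  have hs0 : 0 ≤ s :=
    le_trans (Finset.sum_nonneg fun S _ => abs_nonneg _) hL1
  set c := fhat f with hc
  set t : ℝ := ε / (4 * s) with htdef
  have ht0 : 0 ≤ t := div_nonneg hε.le (by linarith)
  set T := Finset.univ.filter (fun S : Finset (Fin n) => S.card ≤ d ∧ t < |c S|) with hT
  have habs : ∀ S : Finset (Fin n), |c S| ≤ s := by
    intro S
    exact le_trans (Finset.single_le_sum (fun S _ => abs_nonneg (c S)) (Finset.mem_univ S)) hL1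
  refine ⟨T, c, ?_, ?_, ?_⟩
  · -- cardinality bound
    by_cases hs : s = 0
    · have hTe : T = ∅ := by
        rw [Finset.eq_empty_iff_forall_notMem]
        intro S hS
        rw [hT, Finset.mem_filter] at hS
        have h1 : |c S| ≤ 0 := by rw [← hs]; exact habs S
        have h2 : 0 ≤ t := ht0
        have := hS.2.2
        linarith [abs_nonneg (c S)]
      rw [hTe]
      simp only [Finset.card_empty, Nat.cast_zero]
      positivity
    · have hs' : 0 < s := lt_of_le_of_ne hs0 (Ne.symm hs)
      have htpos : 0 < t := div_pos hε (by linarith)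
      have h1 : (T.card : ℝ) * t ≤ s := by
        calc (T.card : ℝ) * t = ∑ _S ∈ T, t := by rw [Finset.sum_const, nsmul_eq_mul]
          _ ≤ ∑ S ∈ T, |c S| := by
              apply Finset.sum_le_sum
              intro S hS
              rw [hT, Finset.mem_filter] at hS
              exact hS.2.2.le
          _ ≤ ∑ S : Finset (Fin n), |c S| := by
              apply Finset.sum_le_sum_of_subset_of_nonneg (Finset.subset_univ T)
              intro S _ _
              exact abs_nonneg _
          _ ≤ s := hL1
      have h2 : (T.card : ℝ) ≤ s / t := by
        rw [le_div_iff₀ htpos]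
        exact h1
      have h3 : s / t = 4 * s ^ 2 / ε := by
        rw [htdef]
        field_simp
      rw [h3] at h2
      linarith
  · -- degree bound
    intro S hS
    rw [hT, Finset.mem_filter] at hS
    exact hS.2.1
  · -- approximation error
    rw [exp_sub_sq f T]
    set A := Finset.univ.filter (fun S : Finset (Fin n) => d < S.card) with hA
    set B := Finset.univ.filter (fun S : Finset (Fin n) => |c S| ≤ t) with hB
    have hsubset : Finset.univ \ T ⊆ A ∪ B := by
      intro S hS
      rw [Finset.mem_sdiff, hT, Finset.mem_filter] at hS
      rw [Finset.mem_union, hA, hB, Finset.mem_filter, Finset.mem_filter]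
      have h1 := hS.2
      push_neg at h1
      by_cases hd : S.card ≤ d
      · exact Or.inr ⟨Finset.mem_univ S, h1 (Finset.mem_univ S) hd⟩
      · exact Or.inl ⟨Finset.mem_univ S, by omega⟩
    have hBsum : ∑ S ∈ B, c S ^ 2 ≤ ε / 4 := by
      have step1 : ∑ S ∈ B, c S ^ 2 ≤ ∑ S ∈ B, t * |c S| := by
        apply Finset.sum_le_sum
        intro S hS
        rw [hB, Finset.mem_filter] at hS
        calc c S ^ 2 = |c S| * |c S| := by rw [abs_mul_abs_self]; ring
          _ ≤ t * |c S| := mul_le_mul_of_nonneg_right hS.2 (abs_nonneg _)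
      have step2 : ∑ S ∈ B, t * |c S| ≤ t * s := by
        rw [← Finset.mul_sum]
        apply mul_le_mul_of_nonneg_left _ ht0
        calc ∑ S ∈ B, |c S| ≤ ∑ S : Finset (Fin n), |c S| := by
              apply Finset.sum_le_sum_of_subset_of_nonneg (Finset.subset_univ B)
              intro S _ _
              exact abs_nonneg _
          _ ≤ s := hL1
      have step3 : t * s ≤ ε / 4 := by
        by_cases hs : s = 0
        · rw [hs]; linarith
        · have hs' : 0 < s := lt_of_le_of_ne hs0 (Ne.symm hs)
          rw [htdef]
          rw [div_mul_eq_mul_div, mul_comm]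
          rw [div_le_div_iff₀ (by linarith) (by norm_num)]
          ring_nf
          nlinarith
      linarith
    have hsum_union : ∑ S ∈ A ∪ B, c S ^ 2 ≤ ∑ S ∈ A, c S ^ 2 + ∑ S ∈ B, c S ^ 2 := by
      have := Finset.sum_union_inter (s₁ := A) (s₂ := B) (f := fun S => c S ^ 2)
      have hnn : 0 ≤ ∑ S ∈ A ∩ B, c S ^ 2 := Finset.sum_nonneg fun S _ => sq_nonneg _
      linarith
    calc ∑ S ∈ Finset.univ \ T, c S ^ 2 ≤ ∑ S ∈ A ∪ B, c S ^ 2 := by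
          apply Finset.sum_le_sum_of_subset_of_nonneg hsubset
          intro S _ _
          exact sq_nonneg _
      _ ≤ ∑ S ∈ A, c S ^ 2 + ∑ S ∈ B, c S ^ 2 := hsum_union
      _ ≤ ε / 4 + ε / 4 := add_le_add hconc hBsum
      _ = ε / 2 := by ring
end
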